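/- arXiv:1311.3056 — 4 statements merged into one kernel-verified Lean document; each statement's English description precedes it below -/
import Mathlib

section
/- Let γ : [0,L] → ℝ^d be a C^{1,1} arc length curve with ‖γ''‖_{L^∞} = K, and let s ≤ b ≤ t. Then |∫_s^t ∫_b^t ⟨γ'(v), γ'(v) - γ'(u)⟩ du dv| ≤ K² |t-s|³ |t-b|. -/
open MeasureTheory Set
open scoped RealInnerProductSpace

/-- For unit vectors `a, b`, `|⟪a, a - b⟫| ≤ ‖a - b‖² / 2`. -/
lemma aux_inner_bound {E : Type*} [NormedAddCommGroup E] [InnerProductSpace ℝ E]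
    (a b : E) (ha : ‖a‖ = 1) (hb : ‖b‖ = 1) :
    |⟪a, a - b⟫| ≤ ‖a - b‖ ^ 2 / 2 := by
  have h1 : ⟪a, a - b⟫ = 1 - ⟪a, b⟫ := by
    rw [inner_sub_right, real_inner_self_eq_norm_sq, ha]; ring
  have h2 : ‖a - b‖ ^ 2 = 2 - 2 * ⟪a, b⟫ := by
    rw [@norm_sub_sq_real, ha, hb]; ring
  have h3 : ⟪a, b⟫ ≤ 1 := by
    have := real_inner_le_norm a b
    rwa [ha, hb, one_mul] at this
  rw [h1, abs_of_nonneg (by linarith), h2]; linarith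

/-- For a `C^{1,1}` arc length curve `γ : [0,L] → ℝ^d` with
`‖γ''‖_{L^∞} = K` and `s ≤ b ≤ t`:
`|∫_s^t ∫_b^t ⟨γ'(v), γ'(v) - γ'(u)⟩ du dv| ≤ K² |t-s|³ |t-b|`. -/
theorem stmt3 (d : ℕ) (L K : ℝ) (hL : 0 < L) (hK : 0 ≤ K)
    (γ γ' γ'' : ℝ → EuclideanSpace ℝ (Fin d))
    (hderiv : ∀ u ∈ Set.Icc 0 L, HasDerivWithinAt γ (γ' u) (Set.Icc 0 L) u)
    (hunit : ∀ u ∈ Set.Icc 0 L, ‖γ' u‖ = 1)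
    (hlip' : LipschitzOnWith (Real.toNNReal K) γ' (Set.Icc 0 L))
    (hderiv2 : ∀ᵐ u ∂(volume.restrict (Set.Icc 0 L)),
      HasDerivWithinAt γ' (γ'' u) (Set.Icc 0 L) u ∧ ‖γ'' u‖ ≤ K)
    (s b t : ℝ) (hs : s ∈ Set.Icc 0 L) (ht : t ∈ Set.Icc 0 L)
    (hsb : s ≤ b) (hbt : b ≤ t) :
    |∫ v in s..t, ∫ u in b..t, ⟪γ' v, γ' v - γ' u⟫|
      ≤ K ^ 2 * |t - s| ^ 3 * |t - b| := by
  have hst : s ≤ t := hsb.trans hbt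
  have hsubIcc : Set.Icc s t ⊆ Set.Icc 0 L := Set.Icc_subset_Icc hs.1 ht.2
  -- pointwise bound
  have hpt : ∀ v ∈ Set.Icc s t, ∀ u ∈ Set.Icc s t,
      |⟪γ' v, γ' v - γ' u⟫| ≤ K ^ 2 * (t - s) ^ 2 := by
    intro v hv u hu
    have hvL := hsubIcc hv
    have huL := hsubIcc hu
    have hlip : ‖γ' v - γ' u‖ ≤ K * |v - u| := by
      have := hlip'.dist_le_mul v hvL u huL
      rw [dist_eq_norm] at this
      rwa [Real.coe_toNNReal K hK, Real.dist_eq] at this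
    have hvu : |v - u| ≤ t - s := by
      rw [abs_sub_le_iff]; constructor <;> linarith [hv.1, hv.2, hu.1, hu.2]
    calc |⟪γ' v, γ' v - γ' u⟫| ≤ ‖γ' v - γ' u‖ ^ 2 / 2 :=
          aux_inner_bound _ _ (hunit v hvL) (hunit u huL)
      _ ≤ (K * (t - s)) ^ 2 / 2 := by
          have h1 : ‖γ' v - γ' u‖ ≤ K * (t - s) :=
            hlip.trans (by nlinarith)
          have h0 : (0:ℝ) ≤ ‖γ' v - γ' u‖ := norm_nonneg _
          nlinarith
      _ ≤ K ^ 2 * (t - s) ^ 2 := by nlinarith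
  -- inner integral bound
  have hinner : ∀ v ∈ Set.Icc s t,
      |∫ u in b..t, ⟪γ' v, γ' v - γ' u⟫| ≤ K ^ 2 * (t - s) ^ 2 * |t - b| := by
    intro v hv
    have := intervalIntegral.norm_integral_le_of_norm_le_const
      (f := fun u => ⟪γ' v, γ' v - γ' u⟫) (a := b) (b := t)
      (C := K ^ 2 * (t - s) ^ 2) ?_
    · simpa using this
    · intro u hu
      have hu' : u ∈ Set.Icc s t := by
        rw [Set.uIoc_of_le hbt] at hu
        exact ⟨hsb.trans hu.1.le, hu.2⟩
      simpa using hpt v hv u hu'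
  -- outer integral bound
  have houter := intervalIntegral.norm_integral_le_of_norm_le_const
    (f := fun v => ∫ u in b..t, ⟪γ' v, γ' v - γ' u⟫) (a := s) (b := t)
    (C := K ^ 2 * (t - s) ^ 2 * |t - b|) ?_
  · rw [Real.norm_eq_abs] at houter
    have hts : |t - s| = t - s := abs_of_nonneg (by linarith)
    calc |∫ v in s..t, ∫ u in b..t, ⟪γ' v, γ' v - γ' u⟫|
        ≤ K ^ 2 * (t - s) ^ 2 * |t - b| * |t - s| := houter
      _ = K ^ 2 * |t - s| ^ 3 * |t - b| := by rw [hts]; ring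
  · intro v hv
    have hv' : v ∈ Set.Icc s t := by
      rw [Set.uIoc_of_le hst] at hv
      exact ⟨le_of_lt hv.1, hv.2⟩
    simpa using hinner v hv'
end

section
/- In the setting of the previous lemma, if additionally z ∈ Y, then F(z) = inf_Y F and lim_n F_n(z_n) = F(z). -/
set_option maxHeartbeats 1000000


open Filter

lemma ereal_le_of_forall_add_eps {x y : EReal}
    (h : ∀ ε : ℝ, 0 < ε → y ≤ x + ε) : y ≤ x := by
  induction x with
  | bot =>
    have := h 1 one_pos
    simpa using this
  | coe x =>
    rw [← EReal.le_of_forall_lt_iff_le]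
    intro z hz
    have hz' : x < z := by exact_mod_cast hz
    have := h (z - x) (by linarith)
    calc y ≤ (x : EReal) + (↑(z - x) : EReal) := this
      _ = ((x + (z - x) : ℝ) : EReal) := by rw [EReal.coe_add]
      _ = (z : EReal) := by norm_num
  | top => exact le_top

/-- In the setting of the abstract convergence-of-almost-minimizers
lemma, if additionally `z ∈ Y`, then `F(z) = inf_Y F` and
`lim_n F_n(z_n) = F(z)`. -/
theorem stmt8 (X : Type*) [MetricSpace X] (Y : Set X)
    (F : X → EReal) (Fn : ℕ → X → EReal)
    (hliminf : ∀ (x : X) (xn : ℕ → X), Tendsto xn atTop (nhds x) →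
      F x ≤ liminf (fun n => Fn n (xn n)) atTop)
    (hlimsup : ∀ y ∈ Y, ∃ yn : ℕ → X,
      limsup (fun n => Fn n (yn n)) atTop ≤ F y)
    (z : X) (zn : ℕ → X) (hzn : Tendsto zn atTop (nhds z))
    (halm : Tendsto (fun n => Fn n (zn n) - ⨅ x, Fn n x) atTop (nhds 0))
    (hzY : z ∈ Y) :
    F z = ⨅ y ∈ Y, F y ∧
      Tendsto (fun n => Fn n (zn n)) atTop (nhds (F z)) := by
  -- key comparison: limsup of Fn along zn is at most limsup along any sequence
  have key : ∀ yn : ℕ → X, limsup (fun n => Fn n (zn n)) atTop ≤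
      limsup (fun n => Fn n (yn n)) atTop := by
    intro yn
    apply ereal_le_of_forall_add_eps
    intro ε hε
    have hev : ∀ᶠ n in atTop, Fn n (zn n) - (⨅ x, Fn n x) < (ε : EReal) := by
      have h0 : (0 : EReal) < (ε : EReal) := by exact_mod_cast hε
      exact halm.eventually_lt_const h0
    have h2 : ∀ᶠ n in atTop, Fn n (zn n) ≤ Fn n (yn n) + (ε : EReal) := by
      refine hev.mono fun n hn => ?_
      have hb : (⨅ x, Fn n x) ≤ Fn n (yn n) := iInf_le _ _
      have h3 : Fn n (zn n) ≤ (ε : EReal) + ⨅ x, Fn n x :=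
        (EReal.sub_le_iff_le_add (Or.inr (EReal.coe_ne_top ε))
          (Or.inr (EReal.coe_ne_bot ε))).1 hn.le
      calc Fn n (zn n) ≤ (ε : EReal) + ⨅ x, Fn n x := h3
        _ ≤ (ε : EReal) + Fn n (yn n) := add_le_add_right hb _
        _ = Fn n (yn n) + (ε : EReal) := add_comm _ _
    calc limsup (fun n => Fn n (zn n)) atTop
        ≤ limsup (fun n => Fn n (yn n) + (ε : EReal)) atTop :=
          limsup_le_limsup h2
      _ = limsup ((fun n => Fn n (yn n)) + (fun _ => (ε : EReal))) atTop := rfl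
      _ ≤ limsup (fun n => Fn n (yn n)) atTop +
          limsup (fun _ : ℕ => (ε : EReal)) atTop := by
          refine EReal.limsup_add_le ?_ ?_
          · right; rw [limsup_const]; exact EReal.coe_ne_top ε
          · right; rw [limsup_const]; exact EReal.coe_ne_bot ε
      _ = limsup (fun n => Fn n (yn n)) atTop + (ε : EReal) := by rw [limsup_const]
  obtain ⟨yz, hyz⟩ := hlimsup z hzY
  have hFz_liminf : F z ≤ liminf (fun n => Fn n (zn n)) atTop := hliminf z zn hzn
  have hls : limsup (fun n => Fn n (zn n)) atTop ≤ F z := (key yz).trans hyz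
  have hmin : ∀ y ∈ Y, F z ≤ F y := by
    intro y hy
    obtain ⟨yn, hyn⟩ := hlimsup y hy
    calc F z ≤ liminf (fun n => Fn n (zn n)) atTop := hFz_liminf
      _ ≤ limsup (fun n => Fn n (zn n)) atTop := liminf_le_limsup
      _ ≤ limsup (fun n => Fn n (yn n)) atTop := key yn
      _ ≤ F y := hyn
  constructor
  · exact le_antisymm (le_iInf₂ hmin) (iInf₂_le z hzY)
  · exact tendsto_of_le_liminf_of_limsup_le hFz_liminf hls
end

section
/- Let γ_n, γ : S_1 → ℝ^d be arc length parametrized closed curves of length 1 with γ_n → γ in L^1. Then E(γ) ≤ liminf_n E_n(γ_n), where E is the Möbius energy and E_n is the discrete Möbius energy (with E_n(γ_n) = +∞ if γ_n is not an equilateral polygon with n segments). -/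
open MeasureTheory Set Filter
open scoped ENNReal Classical

/-- Intrinsic (shortest-path) distance on the circle of length `L`,
for parameters in `ℝ` taken modulo `L`. -/
noncomputable def circleDist (L s t : ℝ) : ℝ :=
  sInf {r : ℝ | ∃ n : ℤ, r = |s - t + n * L|}

/-- `γ : S_1 → ℝ^d` is a closed curve of length 1 parametrized by arc length:
it is periodic with period 1, chords are dominated by intrinsic distance, and
the length (total variation) of every subarc equals its parameter length. -/
def IsArcLength {d : ℕ} (γ : ℝ → EuclideanSpace ℝ (Fin d)) : Prop :=
  Function.Periodic γ 1 ∧ (∀ s t, ‖γ t - γ s‖ ≤ circleDist 1 s t) ∧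
    ∀ s t : ℝ, s ≤ t → t ≤ s + 1 →
      eVariationOn γ (Set.Icc s t) = ENNReal.ofReal (t - s)

/-- `γ` is (the arc length parametrization of) an equilateral closed polygon
with `n` segments: on each parameter interval `[i/n,(i+1)/n]` it is the affine
segment between the vertices `γ(i/n)` and `γ((i+1)/n)`. -/
def IsEquilateralPolygon {d : ℕ} (n : ℕ) (γ : ℝ → EuclideanSpace ℝ (Fin d)) : Prop :=
  ∀ i : ℕ, i < n → ∀ t ∈ Set.Icc ((i : ℝ) / n) (((i : ℝ) + 1) / n),
    γ t = (((i : ℝ) + 1) - n * t) • γ ((i : ℝ) / n) + (n * t - (i : ℝ)) • γ (((i : ℝ) + 1) / n)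

/-- The Möbius energy, valued in `[0,∞]`. -/
noncomputable def mobiusEnergy {d : ℕ} (γ : ℝ → EuclideanSpace ℝ (Fin d)) : ℝ≥0∞ :=
  ∫⁻ t in Set.Icc (0 : ℝ) 1, ∫⁻ s in Set.Icc (0 : ℝ) 1,
    ((ENNReal.ofReal (‖γ t - γ s‖ ^ 2))⁻¹ - ENNReal.ofReal (1 / circleDist 1 s t ^ 2))

/-- The discrete Möbius energy of an equilateral polygon with `n` segments,
parametrized by arc length (vertex parameters `a_i = i/n`), valued in `[0,∞]`. -/
noncomputable def discreteMobiusEnergy {d : ℕ} (n : ℕ)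
    (γ : ℝ → EuclideanSpace ℝ (Fin d)) : ℝ≥0∞ :=
  ∑ i ∈ Finset.range n, ∑ j ∈ Finset.range n,
    if i = j then 0 else
      ((ENNReal.ofReal (‖γ ((j : ℝ) / n) - γ ((i : ℝ) / n)‖ ^ 2))⁻¹
          - ENNReal.ofReal (1 / circleDist 1 ((i : ℝ) / n) ((j : ℝ) / n) ^ 2))
        * ENNReal.ofReal (1 / (n : ℝ) ^ 2)

/-- The discrete Möbius energy extended by `+∞` outside the equilateral
polygons with `n` segments. -/
noncomputable def discreteMobiusEnergyExt {d : ℕ} (n : ℕ)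
    (γ : ℝ → EuclideanSpace ℝ (Fin d)) : ℝ≥0∞ :=
  if IsEquilateralPolygon n γ then discreteMobiusEnergy n γ else ⊤

/-! ### Auxiliary lemmas about `circleDist` -/

lemma cd_nonempty (s t : ℝ) : {r : ℝ | ∃ n : ℤ, r = |s - t + n * 1|}.Nonempty :=
  ⟨|s - t + (0:ℤ) * 1|, 0, rfl⟩

lemma cd_bdd (s t : ℝ) : BddBelow {r : ℝ | ∃ n : ℤ, r = |s - t + n * 1|} :=
  ⟨0, fun _ ⟨_, hn⟩ => hn ▸ abs_nonneg _⟩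

lemma circleDist_le (s t : ℝ) (n : ℤ) : circleDist 1 s t ≤ |s - t + n * 1| :=
  csInf_le (cd_bdd s t) ⟨n, rfl⟩

lemma circleDist_le_abs (s t : ℝ) : circleDist 1 s t ≤ |s - t| := by
  simpa using circleDist_le s t 0

lemma circleDist_le_add (a b s t : ℝ) :
    circleDist 1 a b ≤ circleDist 1 s t + (|a - s| + |b - t|) := by
  have h : circleDist 1 a b - (|a - s| + |b - t|) ≤ circleDist 1 s t := by
    refine le_csInf (cd_nonempty s t) ?_
    rintro r ⟨n, rfl⟩
    have h1 : circleDist 1 a b ≤ |a - b + n * 1| := circleDist_le a b n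
    have h2 : |a - b + n * 1| ≤ |s - t + n * 1| + (|a - s| + |b - t|) := by
      have heq : a - b + n * 1 = (s - t + n * 1) + ((a - s) - (b - t)) := by ring
      rw [heq]
      calc |(s - t + n * 1) + ((a - s) - (b - t))| ≤ |s - t + n * 1| + |(a - s) - (b - t)| :=
            abs_add_le _ _
        _ ≤ |s - t + n * 1| + (|a - s| + |b - t|) := by
            have := abs_sub (a - s) (b - t); linarith
    linarith
  linarith

lemma circleDist_symm_le (s t : ℝ) : circleDist 1 s t ≤ circleDist 1 t s := by
  refine le_csInf (cd_nonempty t s) ?_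
  rintro r ⟨n, rfl⟩
  have h : |t - s + n * 1| = |s - t + (-n) * 1| := by
    rw [← abs_neg]; ring_nf
  rw [h]
  have := circleDist_le s t (-n)
  push_cast at this ⊢
  exact this

lemma circleDist_symm (s t : ℝ) : circleDist 1 s t = circleDist 1 t s :=
  le_antisymm (circleDist_symm_le s t) (circleDist_symm_le t s)

lemma circleDist_lower (s t : ℝ) : min |s - t| (1 - |s - t|) ≤ circleDist 1 s t := by
  refine le_csInf (cd_nonempty s t) ?_
  rintro r ⟨n, rfl⟩
  rcases eq_or_ne n 0 with h | h
  · subst h; simpa using min_le_left |s - t| (1 - |s - t|)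
  · have h1 : (1:ℝ) ≤ |(n:ℝ)| := by
      have := Int.one_le_abs (by simpa using h)
      calc (1:ℝ) = ((1:ℤ):ℝ) := by norm_num
        _ ≤ ((|n|:ℤ):ℝ) := by exact_mod_cast this
        _ = |(n:ℝ)| := by push_cast; ring
    have h4 : |(n:ℝ)| ≤ |s - t + n * 1| + |s - t| := by
      calc |(n:ℝ)| = |(s - t + n*1) + (-(s-t))| := by ring_nf
        _ ≤ |s - t + n*1| + |(-(s-t))| := abs_add_le _ _
        _ = |s - t + n*1| + |s - t| := by rw [abs_neg]
    have : 1 - |s - t| ≤ |s - t + n * 1| := by linarith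
    exact le_trans (min_le_right _ _) this

lemma circleDist_pos {s t : ℝ} (h : s ≠ t) (h2 : |s - t| < 1) : 0 < circleDist 1 s t := by
  refine lt_of_lt_of_le ?_ (circleDist_lower s t)
  have : 0 < |s - t| := abs_pos.2 (sub_ne_zero.2 h)
  exact lt_min this (by linarith)

/-! ### Arc length curves are 1-Lipschitz -/

lemma IsArcLength.chord {d : ℕ} {γ : ℝ → EuclideanSpace ℝ (Fin d)} (h : IsArcLength γ)
    (a b : ℝ) : ‖γ b - γ a‖ ≤ |b - a| := by
  refine (h.2.1 a b).trans ((circleDist_le_abs a b).trans ?_)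
  rw [abs_sub_comm]

lemma IsArcLength.cont {d : ℕ} {γ : ℝ → EuclideanSpace ℝ (Fin d)} (h : IsArcLength γ) :
    Continuous γ := by
  refine LipschitzWith.continuous (K := 1) (LipschitzWith.of_dist_le_mul fun a b => ?_)
  rw [dist_eq_norm, dist_eq_norm]
  simpa using h.chord b a

/-! ### L¹ convergence of equi-Lipschitz curves gives pointwise convergence -/

lemma ptwise_conv {d : ℕ} {γ : ℝ → EuclideanSpace ℝ (Fin d)}
    {p : ℕ → ℝ → EuclideanSpace ℝ (Fin d)}
    (hγ : IsArcLength γ) (hp : ∀ n, IsArcLength (p n))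
    (hconv : Tendsto (fun n => ∫ t in (0:ℝ)..1, ‖p n t - γ t‖) atTop (nhds 0))
    {t : ℝ} (ht : t ∈ Ioo (0:ℝ) 1) :
    Tendsto (fun n => p n t) atTop (nhds (γ t)) := by
  rw [tendsto_iff_norm_sub_tendsto_zero, Metric.tendsto_atTop]
  intro ε hε
  set δ := min (ε/4) (min t (1 - t)) with hδdef
  have hδ : 0 < δ := lt_min (by linarith) (lt_min ht.1 (by simpa using ht.2))
  have hδε : δ ≤ ε/4 := min_le_left _ _
  have hδt : δ ≤ t := le_trans (min_le_right _ _) (min_le_left _ _)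
  have hδt1 : δ ≤ 1 - t := le_trans (min_le_right _ _) (min_le_right _ _)
  obtain ⟨N, hN⟩ := (Metric.tendsto_atTop.1 hconv) (δ * ε) (by positivity)
  refine ⟨N, fun n hn => ?_⟩
  have hint := hN n hn
  rw [Real.dist_eq, sub_zero] at hint
  rw [Real.dist_eq, sub_zero, abs_of_nonneg (norm_nonneg _)]
  by_contra hcon
  push_neg at hcon
  set f : ℝ → ℝ := fun s => ‖p n s - γ s‖ with hfdef
  have hfc : Continuous f := (((hp n).cont.sub hγ.cont).norm)
  have key : ∀ s ∈ Icc (t - δ) (t + δ), ε/2 ≤ f s := by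
    intro s hs
    have h1 : ‖p n t - γ t‖ ≤ ‖p n t - p n s‖ + ‖p n s - γ s‖ + ‖γ s - γ t‖ := by
      have heq : p n t - γ t = (p n t - p n s) + (p n s - γ s) + (γ s - γ t) := by abel
      rw [heq]
      exact (norm_add_le _ _).trans (by gcongr; exact norm_add_le _ _)
    have h2 : ‖p n t - p n s‖ ≤ |t - s| := (hp n).chord s t
    have h3 : ‖γ s - γ t‖ ≤ |s - t| := hγ.chord t s
    have h4 : |t - s| ≤ δ := by
      rw [abs_sub_le_iff]; constructor <;> [linarith [hs.1]; linarith [hs.2]]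
    have h5 : |s - t| ≤ δ := by rw [abs_sub_comm] at h4; exact h4
    simp only [hfdef]
    linarith
  have hi1 : IntervalIntegrable f volume (t - δ) (t + δ) := hfc.intervalIntegrable _ _
  have hi0 : IntervalIntegrable f volume 0 1 := hfc.intervalIntegrable _ _
  have hstep1 : δ * ε ≤ ∫ s in (t-δ)..(t+δ), f s := by
    have hconst : (∫ _ in (t-δ)..(t+δ), (ε/2 : ℝ)) = δ * ε := by
      rw [intervalIntegral.integral_const]; simp; ring
    rw [← hconst]
    exact intervalIntegral.integral_mono_on (by linarith)
      (intervalIntegrable_const) hi1 key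
  have hstep2 : (∫ s in (t-δ)..(t+δ), f s) ≤ ∫ s in (0:ℝ)..1, f s := by
    refine intervalIntegral.integral_mono_interval (by linarith) (by linarith) (by linarith)
      ?_ hi0
    exact Filter.Eventually.of_forall fun s => norm_nonneg _
  have : (∫ s in (0:ℝ)..1, f s) ≤ |∫ t in (0:ℝ)..1, ‖p n t - γ t‖| := le_abs_self _
  linarith

/-! ### The grid and piecewise-constant representation of the discrete energy -/

noncomputable def gval {d : ℕ} (p : ℝ → EuclideanSpace ℝ (Fin d)) (n i j : ℕ) : ℝ≥0∞ :=
  if i = j then 0 else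
    ((ENNReal.ofReal (‖p ((j:ℝ)/n) - p ((i:ℝ)/n)‖ ^ 2))⁻¹
      - ENNReal.ofReal (1 / circleDist 1 ((i:ℝ)/n) ((j:ℝ)/n) ^ 2))

noncomputable def idx (n : ℕ) (t : ℝ) : ℕ := (⌊(n:ℝ) * t⌋).toNat

lemma idx_measurable (n : ℕ) : Measurable (idx n) := by
  have h1 : Measurable fun t : ℝ => ⌊(n:ℝ) * t⌋ :=
    Int.measurable_floor.comp (measurable_id.const_mul _)
  exact (measurable_from_top (f := Int.toNat)).comp h1

lemma comp_idx_measurable {n : ℕ} (g : ℕ → ℝ≥0∞) : Measurable (fun t => g (idx n t)) :=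
  (measurable_from_top (f := g)).comp (idx_measurable n)

lemma idx_eq {n i : ℕ} (hi : i < n) {t : ℝ}
    (ht : t ∈ Ico ((i:ℝ)/n) (((i:ℝ)+1)/n)) : idx n t = i := by
  have hn' : (0:ℝ) < n := by
    have : 0 < n := lt_of_le_of_lt (Nat.zero_le i) hi
    exact_mod_cast this
  have h1 : (i:ℝ) ≤ (n:ℝ) * t := by
    have := (div_le_iff₀ hn').1 ht.1
    linarith [this]
  have h2 : (n:ℝ) * t < (i:ℝ) + 1 := by
    have h := ht.2
    rw [lt_div_iff₀ hn'] at h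
    linarith
  have hfl : ⌊(n:ℝ) * t⌋ = (i:ℤ) := by
    rw [Int.floor_eq_iff]
    constructor
    · exact_mod_cast h1
    · push_cast; linarith
  unfold idx
  rw [hfl]
  simp

lemma partition {n : ℕ} (hn : 1 ≤ n) :
    Ico (0:ℝ) 1 = ⋃ i ∈ Finset.range n, Ico ((i:ℝ)/n) (((i:ℝ)+1)/n) := by
  have hn' : (0:ℝ) < n := by exact_mod_cast hn
  ext t
  simp only [mem_iUnion, Finset.mem_range, mem_Ico, exists_prop]
  constructor
  · rintro ⟨h0, h1⟩
    have hnt0 : (0:ℝ) ≤ (n:ℝ) * t := by positivity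
    have hfl0 : (0:ℤ) ≤ ⌊(n:ℝ) * t⌋ := Int.floor_nonneg.2 hnt0
    have hcast : ((idx n t : ℕ) : ℝ) = ((⌊(n:ℝ) * t⌋ : ℤ) : ℝ) := by
      unfold idx
      have := Int.toNat_of_nonneg hfl0
      exact_mod_cast this
    refine ⟨idx n t, ?_, ?_, ?_⟩
    · have : ((idx n t : ℕ) : ℝ) < (n : ℝ) := by
        rw [hcast]
        calc ((⌊(n:ℝ) * t⌋ : ℤ) : ℝ) ≤ (n:ℝ) * t := Int.floor_le _
          _ < n := by nlinarith
      exact_mod_cast this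
    · rw [div_le_iff₀ hn', hcast]
      calc ((⌊(n:ℝ) * t⌋ : ℤ) : ℝ) ≤ (n:ℝ) * t := Int.floor_le _
        _ = t * n := by ring
    · rw [lt_div_iff₀ hn', hcast]
      calc t * n = (n:ℝ) * t := by ring
        _ < ⌊(n:ℝ) * t⌋ + 1 := Int.lt_floor_add_one _
  · rintro ⟨i, hi, h1, h2⟩
    constructor
    · exact le_trans (by positivity) h1
    · refine lt_of_lt_of_le h2 ?_
      rw [div_le_one hn']
      have : (i:ℝ) + 1 ≤ (n:ℝ) := by exact_mod_cast hi
      linarith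

lemma lint_step {n : ℕ} (hn : 1 ≤ n) (f : ℝ → ℝ≥0∞) (c : ℕ → ℝ≥0∞)
    (hf : ∀ i, i < n → ∀ t ∈ Ico ((i:ℝ)/n) (((i:ℝ)+1)/n), f t = c i) :
    ∫⁻ t in Icc (0:ℝ) 1, f t = ∑ i ∈ Finset.range n, c i * ENNReal.ofReal (1/(n:ℝ)) := by
  have hn' : (0:ℝ) < n := by exact_mod_cast hn
  rw [setLIntegral_congr (Ico_ae_eq_Icc (μ := volume) (a := (0:ℝ)) (b := 1)).symm]
  rw [partition hn]
  rw [lintegral_biUnion_finset ?hd ?hm f]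
  case hd =>
    intro i hi j hj hij
    simp only [Function.onFun]
    rw [Set.Ico_disjoint_Ico]
    rcases lt_or_gt_of_ne hij with h | h
    · have hle : ((i:ℝ)+1)/n ≤ (j:ℝ)/n := by
        gcongr
        exact_mod_cast h
      exact le_trans (min_le_left _ _) (le_trans hle (le_max_right _ _))
    · have hle : ((j:ℝ)+1)/n ≤ (i:ℝ)/n := by
        gcongr
        exact_mod_cast h
      exact le_trans (min_le_right _ _) (le_trans hle (le_max_left _ _))
  case hm => exact fun i _ => measurableSet_Ico
  refine Finset.sum_congr rfl fun i hi => ?_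
  rw [Finset.mem_range] at hi
  rw [setLIntegral_congr_fun measurableSet_Ico
    (fun t ht => hf i hi t ht)]
  rw [setLIntegral_const, Real.volume_Ico]
  congr 1
  congr 1
  field_simp
  ring

lemma discrete_eq {d : ℕ} (p : ℝ → EuclideanSpace ℝ (Fin d)) (n : ℕ) :
    (∫⁻ t in Icc (0:ℝ) 1, ∫⁻ s in Icc (0:ℝ) 1, gval p n (idx n t) (idx n s))
      = discreteMobiusEnergy n p := by
  rcases Nat.eq_zero_or_pos n with rfl | hn
  · have h0 : ∀ t s : ℝ, gval p 0 (idx 0 t) (idx 0 s) = 0 := by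
      intro t s
      have h1 : idx 0 t = 0 := by unfold idx; norm_num
      have h2 : idx 0 s = 0 := by unfold idx; norm_num
      rw [h1, h2]
      unfold gval
      simp
    simp [h0, discreteMobiusEnergy]
  · have hinner : ∀ i : ℕ, (∫⁻ s in Icc (0:ℝ) 1, gval p n i (idx n s))
        = ∑ j ∈ Finset.range n, gval p n i j * ENNReal.ofReal (1/(n:ℝ)) :=
      fun i => lint_step hn _ _ (fun j hj s hs => by rw [idx_eq hj hs])
    have houter := lint_step hn (fun t => ∫⁻ s in Icc (0:ℝ) 1, gval p n (idx n t) (idx n s))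
      (fun i => ∑ j ∈ Finset.range n, gval p n i j * ENNReal.ofReal (1/(n:ℝ)))
      (fun i hi t ht => by rw [idx_eq hi ht]; exact hinner i)
    rw [houter, discreteMobiusEnergy]
    refine Finset.sum_congr rfl fun i _ => ?_
    rw [Finset.sum_mul]
    refine Finset.sum_congr rfl fun j _ => ?_
    unfold gval
    split_ifs with h
    · simp
    · rw [mul_assoc]
      congr 1
      rw [← ENNReal.ofReal_mul (by positivity)]
      congr 1
      rw [one_div, one_div, ← mul_inv]
      congr 1
      ring

/-! ### Convergence of grid points -/

lemma idx_div_bounds {n : ℕ} (hn : 1 ≤ n) {u : ℝ} (hu : 0 ≤ u) :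
    u - 1/(n:ℝ) ≤ ((idx n u : ℕ):ℝ)/n ∧ ((idx n u : ℕ):ℝ)/n ≤ u := by
  have hn' : (0:ℝ) < n := by exact_mod_cast hn
  have hfl0 : (0:ℤ) ≤ ⌊(n:ℝ)*u⌋ := Int.floor_nonneg.2 (by positivity)
  have hcast : ((idx n u : ℕ):ℝ) = ((⌊(n:ℝ)*u⌋:ℤ):ℝ) := by
    unfold idx
    have := Int.toNat_of_nonneg hfl0
    exact_mod_cast this
  constructor
  · rw [sub_le_iff_le_add, ← add_div]
    rw [le_div_iff₀ hn', hcast]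
    have := Int.lt_floor_add_one ((n:ℝ)*u)
    nlinarith
  · rw [div_le_iff₀ hn', hcast]
    have := Int.floor_le ((n:ℝ)*u)
    nlinarith

lemma idx_div_tendsto {u : ℝ} (hu : 0 ≤ u) :
    Tendsto (fun n : ℕ => ((idx n u : ℕ):ℝ)/n) atTop (nhds u) := by
  refine tendsto_of_tendsto_of_tendsto_of_le_of_le' (g := fun n : ℕ => u - 1/(n:ℝ))
    (h := fun _ => u) ?_ tendsto_const_nhds ?_ ?_
  · have h := tendsto_one_div_atTop_nhds_zero_nat (𝕜 := ℝ)
    have := (tendsto_const_nhds (x := u) (f := atTop (α := ℕ))).sub h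
    simpa using this
  · filter_upwards [eventually_ge_atTop 1] with n hn
    exact (idx_div_bounds hn hu).1
  · filter_upwards [eventually_ge_atTop 1] with n hn
    exact (idx_div_bounds hn hu).2

lemma grid_curve_tendsto {d : ℕ} {γ : ℝ → EuclideanSpace ℝ (Fin d)}
    {p : ℕ → ℝ → EuclideanSpace ℝ (Fin d)}
    (hγ : IsArcLength γ) (hp : ∀ n, IsArcLength (p n))
    (hconv : Tendsto (fun n => ∫ t in (0:ℝ)..1, ‖p n t - γ t‖) atTop (nhds 0))
    {u : ℝ} (hu : u ∈ Ioo (0:ℝ) 1) :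
    Tendsto (fun n => p n (((idx n u : ℕ):ℝ)/n)) atTop (nhds (γ u)) := by
  rw [tendsto_iff_norm_sub_tendsto_zero]
  have hb : ∀ n : ℕ, ‖p n (((idx n u : ℕ):ℝ)/n) - γ u‖
      ≤ |((idx n u : ℕ):ℝ)/n - u| + ‖p n u - γ u‖ := by
    intro n
    have heq : p n (((idx n u : ℕ):ℝ)/n) - γ u
        = (p n (((idx n u : ℕ):ℝ)/n) - p n u) + (p n u - γ u) := by abel
    rw [heq]
    refine (norm_add_le _ _).trans ?_
    gcongr
    exact (hp n).chord u _
  refine squeeze_zero (fun n => norm_nonneg _) hb ?_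
  have h1 : Tendsto (fun n : ℕ => |((idx n u : ℕ):ℝ)/n - u|) atTop (nhds 0) := by
    have := ((idx_div_tendsto hu.1.le).sub_const u).abs
    simpa using this
  have h2 := tendsto_iff_norm_sub_tendsto_zero.1 (ptwise_conv hγ hp hconv hu)
  simpa using h1.add h2

/-! ### The key pointwise convergence of the discretized integrand -/

lemma key_tendsto {d : ℕ} {γ : ℝ → EuclideanSpace ℝ (Fin d)}
    {p : ℕ → ℝ → EuclideanSpace ℝ (Fin d)}
    (hγ : IsArcLength γ) (hp : ∀ n, IsArcLength (p n))
    (hconv : Tendsto (fun n => ∫ t in (0:ℝ)..1, ‖p n t - γ t‖) atTop (nhds 0))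
    {t s : ℝ} (ht : t ∈ Ioo (0:ℝ) 1) (hs : s ∈ Ioo (0:ℝ) 1) (hne : s ≠ t) :
    Tendsto (fun n => gval (p n) n (idx n t) (idx n s)) atTop
      (nhds ((ENNReal.ofReal (‖γ t - γ s‖ ^ 2))⁻¹
        - ENNReal.ofReal (1 / circleDist 1 s t ^ 2))) := by
  have hd0 : 0 < circleDist 1 s t := by
    refine circleDist_pos hne ?_
    rw [abs_sub_lt_iff]
    constructor <;> linarith [hs.1, hs.2, ht.1, ht.2]
  -- convergence of the chord lengths
  have hx : Tendsto (fun n => ‖p n (((idx n s : ℕ):ℝ)/n) - p n (((idx n t : ℕ):ℝ)/n)‖)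
      atTop (nhds ‖γ s - γ t‖) :=
    ((grid_curve_tendsto hγ hp hconv hs).sub (grid_curve_tendsto hγ hp hconv ht)).norm
  have hA : Tendsto (fun n =>
      (ENNReal.ofReal (‖p n (((idx n s : ℕ):ℝ)/n) - p n (((idx n t : ℕ):ℝ)/n)‖ ^ 2))⁻¹)
      atTop (nhds ((ENNReal.ofReal (‖γ t - γ s‖ ^ 2))⁻¹)) := by
    rw [show ‖γ t - γ s‖ = ‖γ s - γ t‖ from norm_sub_rev _ _]
    exact ENNReal.tendsto_inv_iff.2 (ENNReal.tendsto_ofReal (hx.pow 2))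
  -- convergence of the circle distances
  have hdist : Tendsto (fun n => circleDist 1 (((idx n t : ℕ):ℝ)/n) (((idx n s : ℕ):ℝ)/n))
      atTop (nhds (circleDist 1 t s)) := by
    rw [tendsto_iff_dist_tendsto_zero]
    refine squeeze_zero (fun n => dist_nonneg)
      (g := fun n => |((idx n t : ℕ):ℝ)/n - t| + |((idx n s : ℕ):ℝ)/n - s|) (fun n => ?_) ?_
    · rw [Real.dist_eq, abs_sub_le_iff]
      constructor
      · have := circleDist_le_add (((idx n t : ℕ):ℝ)/n) (((idx n s : ℕ):ℝ)/n) t s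
        linarith
      · have := circleDist_le_add t s (((idx n t : ℕ):ℝ)/n) (((idx n s : ℕ):ℝ)/n)
        rw [abs_sub_comm t, abs_sub_comm s] at this
        linarith
    · have h1 : Tendsto (fun n : ℕ => |((idx n t : ℕ):ℝ)/n - t|) atTop (nhds 0) := by
        have := ((idx_div_tendsto ht.1.le).sub_const t).abs
        simpa using this
      have h2 : Tendsto (fun n : ℕ => |((idx n s : ℕ):ℝ)/n - s|) atTop (nhds 0) := by
        have := ((idx_div_tendsto hs.1.le).sub_const s).abs
        simpa using this
      simpa using h1.add h2
  have hB : Tendsto (fun n =>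
      ENNReal.ofReal (1 / circleDist 1 (((idx n t : ℕ):ℝ)/n) (((idx n s : ℕ):ℝ)/n) ^ 2))
      atTop (nhds (ENNReal.ofReal (1 / circleDist 1 s t ^ 2))) := by
    rw [circleDist_symm s t]
    refine ENNReal.tendsto_ofReal ?_
    have hd0' : circleDist 1 t s ≠ 0 := by rw [← circleDist_symm]; exact hd0.ne'
    exact tendsto_const_nhds.div (hdist.pow 2) (pow_ne_zero 2 hd0')
  -- eventually off-diagonal
  have hnediag : ∀ᶠ n in atTop, idx n t ≠ idx n s := by
    have habs : 0 < |t - s| := abs_pos.2 (sub_ne_zero.2 (Ne.symm hne))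
    obtain ⟨N, hN⟩ := exists_nat_gt (1/|t - s|)
    filter_upwards [eventually_ge_atTop (max 1 N)] with n hn hcon
    have hn1 : 1 ≤ n := le_trans (le_max_left _ _) hn
    have hn1' : (0:ℝ) < n := by exact_mod_cast hn1
    have hnN : (N:ℝ) ≤ n := by exact_mod_cast le_trans (le_max_right _ _) hn
    have h1 : (0:ℤ) ≤ ⌊(n:ℝ)*t⌋ := Int.floor_nonneg.2 (mul_nonneg hn1'.le ht.1.le)
    have h2 : (0:ℤ) ≤ ⌊(n:ℝ)*s⌋ := Int.floor_nonneg.2 (mul_nonneg hn1'.le hs.1.le)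
    have heq : ⌊(n:ℝ)*t⌋ = ⌊(n:ℝ)*s⌋ := by
      unfold idx at hcon
      omega
    have hk1 : ((⌊(n:ℝ)*t⌋:ℤ):ℝ) ≤ (n:ℝ)*t := Int.floor_le _
    have hk2 : (n:ℝ)*t < ((⌊(n:ℝ)*t⌋:ℤ):ℝ) + 1 := Int.lt_floor_add_one _
    have hk3 : ((⌊(n:ℝ)*s⌋:ℤ):ℝ) ≤ (n:ℝ)*s := Int.floor_le _
    have hk4 : (n:ℝ)*s < ((⌊(n:ℝ)*s⌋:ℤ):ℝ) + 1 := Int.lt_floor_add_one _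
    have hsmall : |(n:ℝ)*t - (n:ℝ)*s| < 1 := by
      rw [abs_sub_lt_iff]
      rw [heq] at hk1 hk2
      constructor <;> linarith
    have hlarge : 1 < (n:ℝ) * |t - s| := by
      have hstep : 1 < (N:ℝ) * |t - s| := by
        rw [div_lt_iff₀ habs] at hN
        linarith
      have : (N:ℝ) * |t - s| ≤ (n:ℝ) * |t - s| := by gcongr
      linarith
    have : (n:ℝ) * |t - s| = |(n:ℝ)*t - (n:ℝ)*s| := by
      rw [← mul_sub, abs_mul, abs_of_nonneg (le_of_lt hn1')]
    linarith [this ▸ hlarge]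
  refine Tendsto.congr' ?_ (ENNReal.Tendsto.sub hA hB (Or.inr ENNReal.ofReal_ne_top))
  filter_upwards [hnediag] with n hn
  unfold gval
  rw [if_neg hn]

/-- liminf inequality: if arc length curves `γ_n → γ` in `L¹`,
then `E(γ) ≤ liminf_n E_n(γ_n)`, where `E_n(γ_n) = +∞` if `γ_n` is not an
equilateral polygon with `n` segments. -/
theorem stmt9 (d : ℕ) (γ : ℝ → EuclideanSpace ℝ (Fin d))
    (p : ℕ → ℝ → EuclideanSpace ℝ (Fin d))
    (hγ : IsArcLength γ) (hp : ∀ n, IsArcLength (p n))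
    (hconv : Tendsto (fun n => ∫ t in (0:ℝ)..1, ‖p n t - γ t‖) atTop (nhds 0)) :
    mobiusEnergy γ ≤ liminf (fun n => discreteMobiusEnergyExt n (p n)) atTop := by
  have hmono : (fun n => discreteMobiusEnergy n (p n))
      ≤ᶠ[atTop] (fun n => discreteMobiusEnergyExt n (p n)) := by
    refine Eventually.of_forall fun n => ?_
    simp only [discreteMobiusEnergyExt]
    split_ifs
    · exact le_rfl
    · exact le_top
  refine le_trans ?_ (liminf_le_liminf hmono)
  have h01 : ∀ᵐ x : ℝ, x ≠ 0 ∧ x ≠ 1 := by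
    have hm : volume ({(0:ℝ), 1} : Set ℝ) = 0 := (Set.toFinite _).measure_zero _
    filter_upwards [measure_eq_zero_iff_ae_notMem.1 hm] with x hx
    simp only [mem_insert_iff, mem_singleton_iff] at hx
    push_neg at hx
    exact hx
  have hIoo : ∀ᵐ x ∂(volume.restrict (Icc (0:ℝ) 1)), x ∈ Ioo (0:ℝ) 1 := by
    filter_upwards [ae_restrict_mem measurableSet_Icc, ae_restrict_of_ae h01] with x h1 h2
    exact ⟨lt_of_le_of_ne h1.1 (Ne.symm h2.1), lt_of_le_of_ne h1.2 h2.2⟩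
  rw [mobiusEnergy]
  have step1 : ∀ t ∈ Ioo (0:ℝ) 1,
      (∫⁻ s in Icc (0:ℝ) 1,
        ((ENNReal.ofReal (‖γ t - γ s‖ ^ 2))⁻¹ - ENNReal.ofReal (1 / circleDist 1 s t ^ 2)))
        ≤ liminf (fun n => ∫⁻ s in Icc (0:ℝ) 1, gval (p n) n (idx n t) (idx n s)) atTop := by
    intro t ht
    have hst : ∀ᵐ s : ℝ, s ≠ t := by
      have hm : volume ({t} : Set ℝ) = 0 := measure_singleton t
      filter_upwards [measure_eq_zero_iff_ae_notMem.1 hm] with x hx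
      simpa using hx
    have hae : ∀ᵐ s ∂(volume.restrict (Icc (0:ℝ) 1)),
        ((ENNReal.ofReal (‖γ t - γ s‖ ^ 2))⁻¹ - ENNReal.ofReal (1 / circleDist 1 s t ^ 2))
          ≤ liminf (fun n => gval (p n) n (idx n t) (idx n s)) atTop := by
      filter_upwards [hIoo, ae_restrict_of_ae hst] with s hsIoo hst'
      rw [← (key_tendsto hγ hp hconv ht hsIoo hst').liminf_eq]
    calc (∫⁻ s in Icc (0:ℝ) 1,
          ((ENNReal.ofReal (‖γ t - γ s‖ ^ 2))⁻¹ - ENNReal.ofReal (1 / circleDist 1 s t ^ 2)))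
        ≤ ∫⁻ s in Icc (0:ℝ) 1,
            liminf (fun n => gval (p n) n (idx n t) (idx n s)) atTop := lintegral_mono_ae hae
      _ ≤ liminf (fun n => ∫⁻ s in Icc (0:ℝ) 1, gval (p n) n (idx n t) (idx n s)) atTop :=
          lintegral_liminf_le (fun n => comp_idx_measurable _)
  calc (∫⁻ t in Icc (0:ℝ) 1, ∫⁻ s in Icc (0:ℝ) 1,
        ((ENNReal.ofReal (‖γ t - γ s‖ ^ 2))⁻¹ - ENNReal.ofReal (1 / circleDist 1 s t ^ 2)))
      ≤ ∫⁻ t in Icc (0:ℝ) 1,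
          liminf (fun n => ∫⁻ s in Icc (0:ℝ) 1, gval (p n) n (idx n t) (idx n s)) atTop := by
        refine lintegral_mono_ae ?_
        filter_upwards [hIoo] with t ht
        exact step1 t ht
    _ ≤ liminf (fun n => ∫⁻ t in Icc (0:ℝ) 1, ∫⁻ s in Icc (0:ℝ) 1,
          gval (p n) n (idx n t) (idx n s)) atTop := by
        refine lintegral_liminf_le fun n => ?_
        exact comp_idx_measurable (fun i => ∫⁻ s in Icc (0:ℝ) 1, gval (p n) n i (idx n s))
    _ = liminf (fun n => discreteMobiusEnergy n (p n)) atTop := by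
        congr 1
        funext n
        exact discrete_eq (p n) n
end

section
/- Let γ : S_1 → ℝ^d be a C^1 arc length curve. Then there exists d > 0 such that for all x ∈ S_1 and all s, t, y ∈ B_{3d}(x): |⟨γ(s)-γ(t), γ(x)-γ(y)⟩| ≥ cos(1/4) · |γ(s)-γ(t)| · |γ(x)-γ(y)| (the (d, 1/4) diamond property). -/
open Set
open scoped RealInnerProductSpace

private lemma stmt16_ftc {dim : ℕ} {γ γ' : ℝ → EuclideanSpace ℝ (Fin dim)}
    (hderiv : ∀ t, HasDerivAt γ (γ' t) t) (hcont : Continuous γ') (a b : ℝ) :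
    γ b - γ a = ∫ u in a..b, γ' u :=
  (intervalIntegral.integral_eq_sub_of_hasDerivAt (fun u _ => hderiv u)
    (hcont.intervalIntegrable a b)).symm

private lemma stmt16_norm_le {dim : ℕ} {γ γ' : ℝ → EuclideanSpace ℝ (Fin dim)}
    (hderiv : ∀ t, HasDerivAt γ (γ' t) t) (hcont : Continuous γ')
    (hunit : ∀ t, ‖γ' t‖ = 1) {a b : ℝ} (hab : a ≤ b) :
    ‖γ b - γ a‖ ≤ b - a := by
  rw [stmt16_ftc hderiv hcont a b]
  have := intervalIntegral.norm_integral_le_of_norm_le_const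
    (C := 1) (f := γ') (a := a) (b := b) (fun x _ => le_of_eq (hunit x))
  rwa [one_mul, abs_of_nonneg (by linarith)] at this

private lemma stmt16_inner_int {dim : ℕ} {γ γ' : ℝ → EuclideanSpace ℝ (Fin dim)}
    (hderiv : ∀ t, HasDerivAt γ (γ' t) t) (hcont : Continuous γ')
    {c a b p q : ℝ} (hab : a ≤ b) (hpq : p ≤ q)
    (hin : ∀ u ∈ Icc a b, ∀ v ∈ Icc p q, c ≤ ⟪γ' u, γ' v⟫) :
    c * (b - a) * (q - p) ≤ ⟪γ b - γ a, γ q - γ p⟫ := by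
  have h1 : ∀ u : ℝ, ⟪γ' u, γ q - γ p⟫ = ∫ v in p..q, ⟪γ' u, γ' v⟫ := by
    intro u
    have h := (innerSL ℝ (γ' u)).intervalIntegral_comp_comm
      (μ := MeasureTheory.volume) (hcont.intervalIntegrable p q)
    simp only [innerSL_apply_apply] at h
    rw [stmt16_ftc hderiv hcont p q, ← h]
  have h2 : ∀ u ∈ Icc a b, c * (q - p) ≤ ⟪γ' u, γ q - γ p⟫ := by
    intro u hu
    rw [h1 u]
    have hint : IntervalIntegrable (fun v => ⟪γ' u, γ' v⟫) MeasureTheory.volume p q :=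
      (continuous_const.inner hcont).intervalIntegrable p q
    have := intervalIntegral.integral_mono_on (μ := MeasureTheory.volume)
      (f := fun _ => c) (g := fun v => ⟪γ' u, γ' v⟫) hpq
      (intervalIntegrable_const) hint (fun v hv => hin u hu v hv)
    simpa [smul_eq_mul, mul_comm] using this
  have h3 : ⟪γ b - γ a, γ q - γ p⟫ = ∫ u in a..b, ⟪γ' u, γ q - γ p⟫ := by
    have h := (innerSL ℝ (γ q - γ p)).intervalIntegral_comp_comm
      (μ := MeasureTheory.volume) (hcont.intervalIntegrable a b)
    simp only [innerSL_apply_apply] at h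
    rw [real_inner_comm, stmt16_ftc hderiv hcont a b, ← h]
    exact intervalIntegral.integral_congr (fun u _ => real_inner_comm _ _)
  rw [h3]
  have hint2 : IntervalIntegrable (fun u => ⟪γ' u, γ q - γ p⟫) MeasureTheory.volume a b :=
    (hcont.inner continuous_const).intervalIntegrable a b
  have := intervalIntegral.integral_mono_on (μ := MeasureTheory.volume)
    (f := fun _ => c * (q - p)) (g := fun u => ⟪γ' u, γ q - γ p⟫) hab
    (intervalIntegrable_const) hint2 h2
  calc c * (b - a) * (q - p) = ∫ _ in a..b, c * (q - p) := by
        rw [intervalIntegral.integral_const]; simp [smul_eq_mul]; ring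
    _ ≤ _ := this

/-- every `C^1` arc length closed curve `γ : S_1 → ℝ^d` has the
`(d, 1/4)` diamond property for some `d > 0`: for all `x` and all
`s, t, y ∈ B_{3d}(x)` (intrinsic balls),
`|⟨γ(s)-γ(t), γ(x)-γ(y)⟩| ≥ cos(1/4) |γ(s)-γ(t)| |γ(x)-γ(y)|`. -/
theorem stmt16 (dim : ℕ) (γ γ' : ℝ → EuclideanSpace ℝ (Fin dim))
    (hper : Function.Periodic γ 1)
    (hderiv : ∀ t, HasDerivAt γ (γ' t) t)
    (hcont : Continuous γ') (hunit : ∀ t, ‖γ' t‖ = 1) :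
    ∃ d > (0:ℝ), ∀ x s t y : ℝ,
      circleDist 1 s x ≤ 3 * d → circleDist 1 t x ≤ 3 * d →
      circleDist 1 y x ≤ 3 * d →
      Real.cos (1 / 4) * ‖γ s - γ t‖ * ‖γ x - γ y‖
        ≤ |⟪γ s - γ t, γ x - γ y⟫| := by
  set c : ℝ := Real.cos (1 / 4) with hc_def
  have hpi : (3:ℝ) < Real.pi := Real.pi_gt_three
  have hc0 : 0 < c := by
    apply Real.cos_pos_of_mem_Ioo
    rw [Set.mem_Ioo]
    constructor <;> nlinarith
  have hc1 : c < 1 := by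
    refine lt_of_le_of_ne (Real.cos_le_one _) (fun h => ?_)
    have := (Real.cos_eq_one_iff_of_lt_of_lt (x := 1/4) (by nlinarith) (by nlinarith)).mp h
    norm_num at this
  -- γ' is periodic
  have hper' : Function.Periodic γ' 1 := by
    intro t
    have hγeq : (fun u : ℝ => γ (u + 1)) = γ := funext fun u => hper u
    have h1 : HasDerivAt (fun u : ℝ => γ (u + 1)) ((1:ℝ) • γ' (t + 1)) t :=
      HasDerivAt.scomp t (hderiv (t + 1)) ((hasDerivAt_id t).add_const 1)
    rw [one_smul, hγeq] at h1
    exact h1.unique (hderiv t)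
  -- uniform continuity of γ' on [-1, 2]
  have huc : UniformContinuousOn γ' (Icc (-1 : ℝ) 2) :=
    (isCompact_Icc).uniformContinuousOn_of_continuous hcont.continuousOn
  set η : ℝ := Real.sqrt (2 * (1 - c)) with hη_def
  have hη : 0 < η := Real.sqrt_pos.mpr (by linarith)
  obtain ⟨δ, hδ, H⟩ := Metric.uniformContinuousOn_iff.mp huc η hη
  set d : ℝ := min δ 1 / 9 with hd_def
  have hd : 0 < d := by positivity
  have hd1 : 8 * d < δ := by
    have : min δ 1 ≤ δ := min_le_left _ _
    have hδ' : 0 < min δ 1 := lt_min hδ one_pos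
    rw [hd_def]; linarith
  have hd2 : 8 * d ≤ 1 := by
    have : min δ 1 ≤ 1 := min_le_right _ _
    rw [hd_def]; linarith
  -- key: derivatives at nearby parameters have inner product ≥ c
  have hkey : ∀ u v : ℝ, |u - v| ≤ 8 * d → c ≤ ⟪γ' u, γ' v⟫ := by
    intro u v huv
    set k : ℤ := ⌊u⌋ with hk
    set u' : ℝ := u - k with hu'
    set v' : ℝ := v - k with hv'
    have hgu : γ' u' = γ' u := by
      rw [hu']
      have := hper'.sub_int_mul_eq (x := u) k
      rwa [mul_one] at this
    have hgv : γ' v' = γ' v := by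
      rw [hv']
      have := hper'.sub_int_mul_eq (x := v) k
      rwa [mul_one] at this
    have hu'0 : 0 ≤ u' := by rw [hu']; have := Int.floor_le u; linarith
    have hu'1 : u' < 1 := by rw [hu']; have := Int.lt_floor_add_one u; linarith
    have huv' : |u' - v'| ≤ 8 * d := by rw [hu', hv']; simpa using huv
    have habs := abs_le.mp huv'
    have hu'mem : u' ∈ Icc (-1 : ℝ) 2 := ⟨by linarith, by linarith⟩
    have hv'mem : v' ∈ Icc (-1 : ℝ) 2 := ⟨by linarith, by linarith⟩
    have hdist : dist u' v' < δ := by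
      rw [Real.dist_eq]; exact lt_of_le_of_lt huv' hd1
    have hnd : dist (γ' u') (γ' v') < η := H u' hu'mem v' hv'mem hdist
    rw [dist_eq_norm] at hnd
    have hsq : ‖γ' u' - γ' v'‖ ^ 2 < 2 * (1 - c) := by
      have h0 : (0:ℝ) ≤ ‖γ' u' - γ' v'‖ := norm_nonneg _
      have := (Real.lt_sqrt h0).mp hnd
      linarith
    have hns : ‖γ' u' - γ' v'‖ ^ 2
        = ‖γ' u'‖ ^ 2 - 2 * ⟪γ' u', γ' v'⟫ + ‖γ' v'‖ ^ 2 := norm_sub_sq_real _ _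
    rw [hunit u', hunit v'] at hns
    rw [← hgu, ← hgv]
    nlinarith
  refine ⟨d, hd, fun x s t y hs ht hy => ?_⟩
  -- pull s, t, y to representatives near x
  have hrep : ∀ z : ℝ, circleDist 1 z x ≤ 3 * d →
      ∃ z' : ℝ, γ z' = γ z ∧ |z' - x| < 4 * d := by
    intro z hz
    have hne : {r : ℝ | ∃ n : ℤ, r = |z - x + n * 1|}.Nonempty :=
      ⟨|z - x + (0:ℤ) * 1|, 0, rfl⟩
    have hlt : sInf {r : ℝ | ∃ n : ℤ, r = |z - x + n * 1|} < 4 * d :=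
      lt_of_le_of_lt hz (by linarith)
    obtain ⟨r, ⟨n, rfl⟩, hr⟩ := exists_lt_of_csInf_lt hne hlt
    refine ⟨z + n, ?_, ?_⟩
    · have := hper.sub_int_mul_eq (x := z + n) n
      rw [mul_one] at this
      simpa using this.symm
    · rw [mul_one] at hr
      have : z + ↑n - x = z - x + ↑n := by ring
      rwa [this]
  obtain ⟨s', hgs, hs'⟩ := hrep s hs
  obtain ⟨t', hgt, ht'⟩ := hrep t ht
  obtain ⟨y', hgy, hy'⟩ := hrep y hy
  rw [← hgs, ← hgt, ← hgy]
  have hs'' := abs_lt.mp hs'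
  have ht'' := abs_lt.mp ht'
  have hy'' := abs_lt.mp hy'
  -- the main estimate for ordered parameters in the window
  have main : ∀ a b p q : ℝ, a ≤ b → p ≤ q →
      |a - x| ≤ 4 * d → |b - x| ≤ 4 * d → |p - x| ≤ 4 * d → |q - x| ≤ 4 * d →
      c * ‖γ b - γ a‖ * ‖γ q - γ p‖ ≤ ⟪γ b - γ a, γ q - γ p⟫ := by
    intro a b p q hab hpq ha hb hp hq
    have ha' := abs_le.mp ha
    have hb' := abs_le.mp hb
    have hp' := abs_le.mp hp
    have hq' := abs_le.mp hq
    have hin : ∀ u ∈ Icc a b, ∀ v ∈ Icc p q, c ≤ ⟪γ' u, γ' v⟫ := by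
      intro u hu v hv
      apply hkey
      rw [abs_le]
      exact ⟨by linarith [hu.1, hv.2, ha'.1, hq'.2], by linarith [hu.2, hv.1, hb'.2, hp'.1]⟩
    have h1 := stmt16_inner_int hderiv hcont hab hpq hin
    have h2 := stmt16_norm_le hderiv hcont hunit hab
    have h3 := stmt16_norm_le hderiv hcont hunit hpq
    have hn1 : (0:ℝ) ≤ ‖γ b - γ a‖ := norm_nonneg _
    have hn2 : (0:ℝ) ≤ ‖γ q - γ p‖ := norm_nonneg _
    have e1 : c * ‖γ b - γ a‖ * ‖γ q - γ p‖ ≤ c * (b - a) * ‖γ q - γ p‖ :=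
      mul_le_mul_of_nonneg_right (mul_le_mul_of_nonneg_left h2 hc0.le) hn2
    have e2 : c * (b - a) * ‖γ q - γ p‖ ≤ c * (b - a) * (q - p) :=
      mul_le_mul_of_nonneg_left h3 (mul_nonneg hc0.le (by linarith))
    linarith
  -- case on orderings; reduce |inner| to the ordered inner product
  rcases le_total s' t' with hst | hst <;> rcases le_total x y' with hxy | hxy
  · -- s' ≤ t', x ≤ y' : γ s' - γ t' = -(γ t' - γ s'), γ x - γ y' = -(γ y' - γ x)
    have := main s' t' x y' hst hxy hs'.le ht'.le (by rw [sub_self, abs_zero]; positivity) hy'.le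
    calc c * ‖γ s' - γ t'‖ * ‖γ x - γ y'‖
        = c * ‖γ t' - γ s'‖ * ‖γ y' - γ x‖ := by rw [norm_sub_rev (γ s'), norm_sub_rev (γ x)]
      _ ≤ ⟪γ t' - γ s', γ y' - γ x⟫ := this
      _ = ⟪γ s' - γ t', γ x - γ y'⟫ := by rw [← inner_neg_neg]; congr 1 <;> abel
      _ ≤ |⟪γ s' - γ t', γ x - γ y'⟫| := le_abs_self _
  · -- s' ≤ t', y' ≤ x
    have := main s' t' y' x hst hxy hs'.le ht'.le hy'.le (by rw [sub_self, abs_zero]; positivity)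
    calc c * ‖γ s' - γ t'‖ * ‖γ x - γ y'‖
        = c * ‖γ t' - γ s'‖ * ‖γ x - γ y'‖ := by rw [norm_sub_rev (γ s')]
      _ ≤ ⟪γ t' - γ s', γ x - γ y'⟫ := this
      _ = -⟪γ s' - γ t', γ x - γ y'⟫ := by
          rw [← inner_neg_left]; congr 1; abel
      _ ≤ |⟪γ s' - γ t', γ x - γ y'⟫| := neg_le_abs _
  · -- t' ≤ s', x ≤ y'
    have := main t' s' x y' hst hxy ht'.le hs'.le (by rw [sub_self, abs_zero]; positivity) hy'.le
    calc c * ‖γ s' - γ t'‖ * ‖γ x - γ y'‖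
        = c * ‖γ s' - γ t'‖ * ‖γ y' - γ x‖ := by rw [norm_sub_rev (γ x)]
      _ ≤ ⟪γ s' - γ t', γ y' - γ x⟫ := this
      _ = -⟪γ s' - γ t', γ x - γ y'⟫ := by
          rw [← inner_neg_right]; congr 1; abel
      _ ≤ |⟪γ s' - γ t', γ x - γ y'⟫| := neg_le_abs _
  · -- t' ≤ s', y' ≤ x
    have := main t' s' y' x hst hxy ht'.le hs'.le hy'.le (by rw [sub_self, abs_zero]; positivity)
    exact le_trans this (le_abs_self _)
end
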